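/- Let H be a complex Hilbert space. For a subspace W of H ⊕ H define its Γ-orthogonal subspace W† = {(u₁,u₂) ∈ H ⊕ H : ⟨u₂, v₁⟩ = ⟨u₁, v₂⟩ for all (v₁,v₂) ∈ W}. Then for any unitary U on H, the subspace W_U = {(u₁,u₂) : i(I + U)u₁ = (I - U)u₂} is maximally isotropic, i.e., W_U† = W_U. -/

import Mathlib

local notation "⟪" x ", " y "⟫" => @inner ℂ _ _ x y

/-- Let `H` be a complex Hilbert space.  For `W ⊆ H ⊕ H` let
`W† = {(u₁,u₂) : ⟨u₂, v₁⟩ = ⟨u₁, v₂⟩ for all (v₁,v₂) ∈ W}` be its `Γ`-orthogonal.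
Then for any unitary `U` on `H`, the subspace
`W_U = {(u₁,u₂) : i (I + U) u₁ = (I - U) u₂}` is maximally isotropic: `W_U† = W_U`. -/
theorem boundary_space_maximally_isotropic
    {H : Type*} [NormedAddCommGroup H] [InnerProductSpace ℂ H] [CompleteSpace H]
    (U : H ≃ₗᵢ[ℂ] H) :
    {p : H × H | ∀ q : H × H, Complex.I • (q.1 + U q.1) = q.2 - U q.2 →
        ⟪p.2, q.1⟫ = ⟪p.1, q.2⟫} =
      {p : H × H | Complex.I • (p.1 + U p.1) = p.2 - U p.2} := by
  ext p
  simp only [Set.mem_setOf_eq]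
  constructor
  · intro h
    -- test against q = (x - Ux, I•(x + Ux)) which lies in W_U
    have key : ∀ x : H, ⟪p.2, x - U x⟫ = ⟪p.1, Complex.I • (x + U x)⟫ := by
      intro x
      exact h (x - U x, Complex.I • (x + U x)) (by
        simp only [map_sub, map_add, map_smul, smul_sub, smul_add]
        abel)
    -- deduce that a certain vector is orthogonal to everything
    have h0 : ∀ y : H,
        ⟪(U p.2 - p.2) + (Complex.I • U p.1 + Complex.I • p.1), y⟫ = 0 := by
      intro y
      have k := key (U.symm y)
      have e1 : ⟪p.2, U.symm y⟫ = ⟪U p.2, y⟫ := by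
        rw [← U.inner_map_map p.2 (U.symm y), U.apply_symm_apply]
      have e2 : ⟪p.1, U.symm y⟫ = ⟪U p.1, y⟫ := by
        rw [← U.inner_map_map p.1 (U.symm y), U.apply_symm_apply]
      simp only [inner_sub_right, inner_add_right, inner_smul_right,
        U.apply_symm_apply, e1, e2] at k
      simp only [inner_add_left, inner_sub_left, inner_smul_left, Complex.conj_I]
      linear_combination k
    have hz : (U p.2 - p.2) + (Complex.I • U p.1 + Complex.I • p.1) = 0 :=
      ext_inner_right ℂ (fun v => by rw [h0 v, inner_zero_left])
    have : Complex.I • p.1 + Complex.I • U p.1 = p.2 - U p.2 := by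
      have := hz
      rw [add_eq_zero_iff_eq_neg] at this
      rw [sub_eq_iff_eq_add] at this
      -- this : U p.2 = -(I•Up.1 + I•p.1) + p.2
      rw [this]
      abel
    rw [smul_add]
    exact this
  · intro hp q hq
    -- Cayley identities
    have hp' : U (p.2 + Complex.I • p.1) = p.2 - Complex.I • p.1 := by
      rw [map_add, map_smul]
      linear_combination (norm := module) hp
    have hq' : U (q.2 + Complex.I • q.1) = q.2 - Complex.I • q.1 := by
      rw [map_add, map_smul]
      linear_combination (norm := module) hq
    have key : ⟪p.2 + Complex.I • p.1, q.2 + Complex.I • q.1⟫ =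
        ⟪p.2 - Complex.I • p.1, q.2 - Complex.I • q.1⟫ := by
      rw [← hp', ← hq', U.inner_map_map]
    simp only [inner_add_left, inner_add_right, inner_sub_left, inner_sub_right,
      inner_smul_left, inner_smul_right, Complex.conj_I] at key
    linear_combination -(Complex.I/2) * key + (⟪p.2, q.1⟫ - ⟪p.1, q.2⟫) * Complex.I_sq
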